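/- arXiv:1007.4330 — 3 statements merged into one kernel-verified Lean document; each statement's English description precedes it below -/
import Mathlib

section
/- For every I ∈ 𝒟⁰ and every choice of parameters r ∈ ℤ₊, γ ∈ (0,1/2): the function β ↦ 1_{good}(I ∔ β) is measurable with respect to the σ-algebra generated by the coordinates (β_j : 2^{−j} ≥ ℓ(I)); the probability π_good := P_β(I ∔ β is good) does not depend on I; and for every bounded random variable X on ({0,1}^N)^ℤ measurable with respect to the σ-algebra generated by (β_j : 2^{−j} < ℓ(I)), one has E_β[X · 1_{good}(I ∔ β)] = π_good · E_β[X]. -/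
open MeasureTheory
open scoped ENNReal

noncomputable section

/-- Points of `ℝ^N` with the `ℓ^∞` (sup) metric, as `Fin N → ℝ`. -/
abbrev Euc (N : ℕ) := Fin N → ℝ

/-- The axis-parallel half-open cube with lower-left corner `c` and sidelength `l`. -/
def cube {N : ℕ} (c : Euc N) (l : ℝ) : Set (Euc N) :=
  {x | ∀ i, c i ≤ x i ∧ x i < c i + l}

/-- Binary sequences `β = (β_j)_{j ∈ ℤ}` with `β_j ∈ {0,1}^N`, parametrising the
translated dyadic systems. -/
abbrev BSeq (N : ℕ) := ℤ → Fin N → Bool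

/-- The translation `Σ_{j > k} 2^{-j} β_j` applied to dyadic cubes of sidelength `2^{-k}`. -/
def betaShift {N : ℕ} (β : BSeq N) (k : ℤ) : Euc N :=
  fun i => ∑' j : {j : ℤ // k < j}, (2 : ℝ) ^ (-(j : ℤ)) * (if β j i then 1 else 0)

/-- The cube `I ∔ β` of the translated dyadic system `𝒟^β`, where `I ∈ 𝒟⁰` has
sidelength `2^{-k}` and lower-left corner `2^{-k}·p`, `p ∈ ℤ^N`. -/
def dyCube {N : ℕ} (β : BSeq N) (k : ℤ) (p : Fin N → ℤ) : Set (Euc N) :=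
  cube (fun i => (p i : ℝ) * (2 : ℝ) ^ (-k) + betaShift β k i) ((2 : ℝ) ^ (-k))

/-- The distance between two sets in the `ℓ^∞` metric of `ℝ^N`. -/
def setDist {N : ℕ} (A B : Set (Euc N)) : ℝ :=
  sInf (Set.image2 dist A B)

/-- The cube `I ∔ β ∈ 𝒟^β` (of sidelength `2^{-k}` and position `p`) is good with
parameters `r, γ`: for every `J ∈ 𝒟^β` with `ℓ(J) ≥ 2^r ℓ(I)` one has
`dist(I, ∂J) > ℓ(I)^γ ℓ(J)^{1-γ}` (`ℓ^∞` distances). -/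
def IsGoodCube {N : ℕ} (r : ℕ) (γ : ℝ) (β : BSeq N) (k : ℤ) (p : Fin N → ℤ) : Prop :=
  ∀ (k' : ℤ) (p' : Fin N → ℤ), k' + (r : ℤ) ≤ k →
    ((2:ℝ) ^ (-k)) ^ γ * ((2:ℝ) ^ (-k')) ^ (1 - γ) <
      setDist (dyCube β k p) (frontier (dyCube β k' p'))

/-- `P` is the canonical product probability measure on `({0,1}^N)^ℤ` making the
coordinates `β_j` independent and uniformly distributed on `{0,1}^N`. -/
def IsBernoulli {N : ℕ} (P : Measure (BSeq N)) : Prop :=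
  IsProbabilityMeasure P ∧
    ∀ (s : Finset ℤ) (b : ℤ → Fin N → Bool),
      P {β | ∀ j ∈ s, β j = b j} = ((2 : ℝ≥0∞) ^ N)⁻¹ ^ s.card

/-- The σ-algebra on `({0,1}^N)^ℤ` generated by the coordinates `β_j`, `j > k`
(i.e. `2^{-j} < 2^{-k}`). -/
def coordGT (N : ℕ) (k : ℤ) : MeasurableSpace (BSeq N) :=
  MeasurableSpace.comap (fun (β : BSeq N) (j : {j : ℤ // k < j}) => β j) inferInstance

/-- The σ-algebra on `({0,1}^N)^ℤ` generated by the coordinates `β_j`, `j ≤ k`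
(i.e. `2^{-j} ≥ 2^{-k}`). -/
def coordLE (N : ℕ) (k : ℤ) : MeasurableSpace (BSeq N) :=
  MeasurableSpace.comap (fun (β : BSeq N) (j : {j : ℤ // j ≤ k}) => β j) inferInstance

open Pointwise

namespace S10

variable {N : ℕ}

/-- affine map `x ↦ l x + v` componentwise. -/
def affT (l : ℝ) (v : Euc N) (x : Euc N) : Euc N := fun i => l * x i + v i

lemma affT_eq_smul_add (l : ℝ) (v : Euc N) (x : Euc N) :
    affT l v x = l • x + v := by
  funext i; simp [affT, smul_eq_mul]

lemma affT_dist (l : ℝ) (hl : 0 ≤ l) (v : Euc N) (x y : Euc N) :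
    dist (affT l v x) (affT l v y) = l * dist x y := by
  rw [affT_eq_smul_add, affT_eq_smul_add, dist_add_right, dist_smul₀]
  simp [Real.norm_eq_abs, abs_of_nonneg hl]

lemma affT_image_cube {l : ℝ} (hl : 0 < l) (v : Euc N) (c : Euc N) (s : ℝ) :
    affT l v '' cube c s = cube (affT l v c) (l * s) := by
  ext y; constructor
  · rintro ⟨x, hx, rfl⟩ i
    have h := hx i
    constructor
    · simp only [affT]
      nlinarith [h.1]
    · simp only [affT]
      nlinarith [h.2]
  · intro hy
    refine ⟨fun i => (y i - v i) / l, fun i => ?_, ?_⟩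
    · have h := hy i
      simp only [affT] at h
      constructor
      · rw [le_div_iff₀ hl]; nlinarith [h.1]
      · rw [div_lt_iff₀ hl]; nlinarith [h.2]
    · funext i; simp only [affT]; field_simp; ring

/-- `affT l v` as a homeomorphism, for `l ≠ 0`. -/
def affTH (l : ℝ) (hl : l ≠ 0) (v : Euc N) : Euc N ≃ₜ Euc N where
  toFun := affT l v
  invFun := affT l⁻¹ (fun i => -(v i) / l)
  left_inv x := by funext i; simp only [affT]; field_simp; ring
  right_inv y := by funext i; simp only [affT]; field_simp; ring
  continuous_toFun := continuous_pi fun i =>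
    (continuous_const.mul (continuous_apply i)).add continuous_const
  continuous_invFun := continuous_pi fun i =>
    (continuous_const.mul (continuous_apply i)).add continuous_const

lemma affT_frontier {l : ℝ} (hl : l ≠ 0) (v : Euc N) (A : Set (Euc N)) :
    frontier (affT l v '' A) = affT l v '' frontier A :=
  ((affTH l hl v).image_frontier A).symm

lemma affT_injective {l : ℝ} (hl : l ≠ 0) (v : Euc N) :
    Function.Injective (affT l v) := (affTH l hl v).injective

lemma affT_image_image {l : ℝ} (hl : l ≠ 0) (v : Euc N) (A : Set (Euc N)) :
    affT l⁻¹ (fun i => -(v i) / l) '' (affT l v '' A) = A := by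
  rw [← Set.image_comp]
  have : (affT l⁻¹ (fun i => -(v i) / l) ∘ affT l v) = id := by
    funext x; exact (affTH l hl v).left_inv x
  rw [this, Set.image_id]

lemma setDist_affT {l : ℝ} (hl : 0 ≤ l) (v : Euc N) (A B : Set (Euc N)) :
    setDist (affT l v '' A) (affT l v '' B) = l * setDist A B := by
  unfold setDist
  rw [Set.image2_image_left, Set.image2_image_right]
  have : Set.image2 (fun a b => dist (affT l v a) (affT l v b)) A B
      = l • Set.image2 dist A B := by
    rw [← Set.image_smul, Set.image_image2]
    exact Set.image2_congr fun a _ b _ => by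
      rw [affT_dist l hl v a b]; simp [smul_eq_mul]
  rw [this, Real.sInf_smul_of_nonneg hl, smul_eq_mul]

end S10

namespace S10
variable {N : ℕ}

/-- The summand of `betaShift` as a function on all of `ℤ`, with indicator. -/
def bsf (β : BSeq N) (i : Fin N) (j : ℤ) : ℝ := (2 : ℝ) ^ (-j) * (if β j i then 1 else 0)

lemma bsf_nonneg (β : BSeq N) (i : Fin N) (j : ℤ) : 0 ≤ bsf β i j := by
  unfold bsf; positivity

lemma summable_bsf (β : BSeq N) (i : Fin N) (c : ℤ) :
    Summable ((Set.Ioi c).indicator (bsf β i)) := by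
  set f := (Set.Ioi c).indicator (bsf β i)
  have hg : Function.Injective (fun n : ℕ => c + 1 + (n : ℤ)) := by
    intro a b h; simpa using h
  rw [← Function.Injective.summable_iff hg ?_]
  · apply Summable.of_nonneg_of_le (f := fun n : ℕ => (2:ℝ)^(-(c+1)) * (1/2)^n)
    · intro n
      exact Set.indicator_nonneg (fun j _ => bsf_nonneg β i j) _
    · intro n
      have hmem : c + 1 + (n : ℤ) ∈ Set.Ioi c := by simp; omega
      have : f (c + 1 + (n:ℤ)) = bsf β i (c + 1 + n) := Set.indicator_of_mem hmem _
      rw [Function.comp_apply] at *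
      rw [this]
      unfold bsf
      have h1 : (2:ℝ) ^ (-(c + 1 + (n:ℤ))) = (2:ℝ)^(-(c+1)) * (1/2)^n := by
        rw [neg_add, zpow_add₀ (two_ne_zero)]
        congr 1
        rw [zpow_neg, zpow_natCast]
        simp [inv_pow, one_div]
      rw [h1]
      have : (if β (c + 1 + (n:ℤ)) i then (1:ℝ) else 0) ≤ 1 := by split <;> norm_num
      have h2 : (0:ℝ) ≤ (2:ℝ)^(-(c+1)) * (1/2)^n := by positivity
      nlinarith [this, h2]
    · exact (summable_geometric_of_lt_one (by norm_num) (by norm_num)).mul_left _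
  · intro j hj
    apply Set.indicator_of_notMem
    intro hmem
    apply hj
    simp only [Set.mem_Ioi] at hmem
    refine ⟨(j - c - 1).toNat, ?_⟩
    show c + 1 + ((j - c - 1).toNat : ℤ) = j
    omega

lemma betaShift_eq_tsum (β : BSeq N) (c : ℤ) (i : Fin N) :
    betaShift β c i = ∑' j : ℤ, (Set.Ioi c).indicator (bsf β i) j := by
  rw [← tsum_subtype (Set.Ioi c) (bsf β i)]
  rfl

/-- Splitting off finitely many scales. -/
lemma betaShift_split (β : BSeq N) {c k : ℤ} (h : c ≤ k) (i : Fin N) :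
    betaShift β c i = betaShift β k i
      + ∑ j ∈ Finset.Ioc c k, (2:ℝ) ^ (-j) * (if β j i then 1 else 0) := by
  rw [betaShift_eq_tsum, betaShift_eq_tsum]
  have hsum2 : Summable ((Set.Ioc c k).indicator (bsf β i)) := by
    apply summable_of_ne_finset_zero (s := Finset.Ioc c k)
    intro b hb
    apply Set.indicator_of_notMem
    simpa [Set.mem_Ioc] using fun h1 h2 => hb (Finset.mem_Ioc.2 ⟨h1, h2⟩)
  have hpt : ∀ j, (Set.Ioi c).indicator (bsf β i) j
      = (Set.Ioi k).indicator (bsf β i) j + (Set.Ioc c k).indicator (bsf β i) j := by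
    intro j
    by_cases h1 : c < j
    · by_cases h2 : j ≤ k
      · rw [Set.indicator_of_mem (by simpa using h1), Set.indicator_of_notMem (by simp; omega),
          Set.indicator_of_mem (by simp [Set.mem_Ioc]; omega)]
        ring
      · rw [Set.indicator_of_mem (by simpa using h1), Set.indicator_of_mem (by simp; omega),
          Set.indicator_of_notMem (by simp [Set.mem_Ioc]; omega)]
        ring
    · rw [Set.indicator_of_notMem (by simpa using h1),
        Set.indicator_of_notMem (by simp; omega),
        Set.indicator_of_notMem (by simp [Set.mem_Ioc]; omega)]
      ring
  rw [tsum_congr hpt, Summable.tsum_add (summable_bsf β i k) hsum2]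
  congr 1
  rw [tsum_eq_sum (s := Finset.Ioc c k)]
  · apply Finset.sum_congr rfl
    intro j hj
    rw [Set.indicator_of_mem (by simpa [Set.mem_Ioc] using Finset.mem_Ioc.1 hj)]
    rfl
  · intro b hb
    apply Set.indicator_of_notMem
    simpa [Set.mem_Ioc] using fun h1 h2 => hb (Finset.mem_Ioc.2 ⟨h1, h2⟩)

/-- Reindexing the finite block of scales as powers `2^t`. -/
lemma sum_Ioc_eq (β : BSeq N) (k : ℤ) (s : ℕ) (i : Fin N) :
    ∑ j ∈ Finset.Ioc (k - s) k, (2:ℝ) ^ (-j) * (if β j i then 1 else 0)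
      = (2:ℝ) ^ (-k) * ∑ t ∈ Finset.range s, (2:ℝ)^t * (if β (k - t) i then 1 else 0) := by
  rw [Finset.mul_sum]
  apply Finset.sum_nbij' (i := fun j => (k - j).toNat) (j := fun t => k - (t:ℤ))
  · intro j hj
    rw [Finset.mem_Ioc] at hj
    simp only [Finset.mem_range]
    omega
  · intro t ht
    rw [Finset.mem_range] at ht
    rw [Finset.mem_Ioc]
    omega
  · intro j hj
    rw [Finset.mem_Ioc] at hj
    omega
  · intro t ht
    rw [Finset.mem_range] at ht
    omega
  · intro j hj
    rw [Finset.mem_Ioc] at hj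
    have h1 : k - ((k - j).toNat : ℤ) = j := by omega
    rw [h1]
    have h2 : (2:ℝ)^(-k) * (2:ℝ)^((k-j).toNat) = (2:ℝ)^(-j) := by
      rw [← zpow_natCast (2:ℝ) ((k-j).toNat), ← zpow_add₀ (two_ne_zero)]
      congr 1
      omega
    rw [← mul_assoc, h2]

/-- Reindexing under shift of all scales: if `β'` agrees with `j ↦ β (j + (k - k'))` above `k'`,
then `betaShift β' k' = 2^(k-k') * betaShift β k`. -/
lemma betaShift_of_shift {β β' : BSeq N} {k k' : ℤ}
    (h : ∀ j, k' < j → β' j = β (j + (k - k'))) (i : Fin N) :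
    betaShift β' k' i = (2:ℝ)^(k - k') * betaShift β k i := by
  unfold betaShift
  rw [← tsum_mul_left]
  let e : {j : ℤ // k < j} ≃ {j : ℤ // k' < j} :=
    { toFun := fun j => ⟨j - (k - k'), by have := j.2; omega⟩
      invFun := fun j => ⟨j + (k - k'), by have := j.2; omega⟩
      left_inv := fun j => by ext; simp
      right_inv := fun j => by ext; simp }
  rw [← Equiv.tsum_eq e (fun j : {j : ℤ // k' < j} =>
    (2:ℝ)^(-(j:ℤ)) * (if β' j i then 1 else 0))]
  apply tsum_congr
  intro j
  have hj : (e j : ℤ) = (j : ℤ) - (k - k') := rfl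
  rw [hj, h _ (by have := j.2; omega)]
  have : (j:ℤ) - (k - k') + (k - k') = (j:ℤ) := by ring
  rw [this]
  have : (2:ℝ) ^ (-((j:ℤ) - (k - k'))) = (2:ℝ)^(k-k') * (2:ℝ)^(-(j:ℤ)) := by
    rw [← zpow_add₀ (two_ne_zero)]
    congr 1
    ring
  rw [this, mul_assoc]

end S10

namespace S10

/-- Carry sequence when adding the integer `a` to the binary digit stream `x`. -/
def carry (a : ℤ) (x : ℕ → Bool) : ℕ → ℤ
  | 0 => a
  | t+1 => (carry a x t + (if x t then 1 else 0)) / 2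

/-- Digits of `a + Σ 2^t x_t` as a 2-adic integer. -/
def adigit (a : ℤ) (x : ℕ → Bool) (t : ℕ) : Bool :=
  decide ((carry a x t + (if x t then 1 else 0)) % 2 = 1)

lemma adigit_val (a : ℤ) (x : ℕ → Bool) (t : ℕ) :
    (if adigit a x t then (1:ℤ) else 0) = (carry a x t + (if x t then 1 else 0)) % 2 := by
  unfold adigit
  have h : (carry a x t + (if x t then 1 else 0)) % 2 = 0 ∨
      (carry a x t + (if x t then 1 else 0)) % 2 = 1 := by omega
  rcases h with h | h <;> simp [h]

lemma carry_step (a : ℤ) (x : ℕ → Bool) (t : ℕ) :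
    carry a x t + (if x t then (1:ℤ) else 0)
      = 2 * carry a x (t+1) + (if adigit a x t then (1:ℤ) else 0) := by
  rw [adigit_val]
  show _ = 2 * (_ / 2) + _
  omega

/-- Key identity: `a + Σ_{t<s} 2^t x_t = 2^s c_s + Σ_{t<s} 2^t y_t`. -/
lemma carry_spec (a : ℤ) (x : ℕ → Bool) : ∀ s : ℕ,
    a + ∑ t ∈ Finset.range s, 2^t * (if x t then (1:ℤ) else 0)
      = 2^s * carry a x s + ∑ t ∈ Finset.range s, 2^t * (if adigit a x t then (1:ℤ) else 0) := by
  intro s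
  induction s with
  | zero => simp [carry]
  | succ s ih =>
    rw [Finset.sum_range_succ, Finset.sum_range_succ, ← add_assoc, ih]
    have h := carry_step a x s
    linear_combination (2:ℤ)^s * h

lemma carry_congr (a : ℤ) {x x' : ℕ → Bool} : ∀ (s : ℕ), (∀ t < s, x t = x' t) →
    carry a x s = carry a x' s := by
  intro s
  induction s with
  | zero => intro; rfl
  | succ s ih =>
    intro h
    show _ / 2 = _ / 2
    rw [ih (fun t ht => h t (by omega)), h s (by omega)]

lemma adigit_congr (a : ℤ) {x x' : ℕ → Bool} (t : ℕ) (h : ∀ t' ≤ t, x t' = x' t') :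
    adigit a x t = adigit a x' t := by
  unfold adigit
  rw [carry_congr a t (fun t' ht' => h t' (by omega)), h t le_rfl]

lemma digit_sum_lt (x : ℕ → Bool) (s : ℕ) :
    0 ≤ ∑ t ∈ Finset.range s, 2^t * (if x t then (1:ℤ) else 0) ∧
    ∑ t ∈ Finset.range s, 2^t * (if x t then (1:ℤ) else 0) < 2^s := by
  induction s with
  | zero => simp
  | succ s ih =>
    rw [Finset.sum_range_succ]
    have h2 : (2:ℤ)^(s+1) = 2^s + 2^s := by ring
    have h3 : (0:ℤ) < 2^s := by positivity
    rcases Bool.eq_false_or_eq_true (x s) with h1 | h1 <;>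
      rw [h1] <;> simp only [if_true, Bool.false_eq_true, if_false] <;>
      constructor <;> linarith [ih.1, ih.2]

lemma digit_sum_inj {x x' : ℕ → Bool} : ∀ (s : ℕ),
    ∑ t ∈ Finset.range s, 2^t * (if x t then (1:ℤ) else 0)
      = ∑ t ∈ Finset.range s, 2^t * (if x' t then (1:ℤ) else 0) →
    ∀ t < s, x t = x' t := by
  intro s
  induction s with
  | zero => intro _ t ht; omega
  | succ s ih =>
    intro h t ht
    rw [Finset.sum_range_succ, Finset.sum_range_succ] at h
    have b1 := digit_sum_lt x s
    have b2 := digit_sum_lt x' s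
    have hbit : x s = x' s := by
      by_contra hne
      rcases Bool.eq_false_or_eq_true (x s) with h1 | h1 <;>
        rcases Bool.eq_false_or_eq_true (x' s) with h2 | h2 <;>
          rw [h1] at h hne <;> rw [h2] at h hne <;>
          simp only [if_true, Bool.false_eq_true, if_false, mul_zero, mul_one, add_zero,
            not_true, not_false_iff] at h hne <;>
          first
            | exact hne rfl
            | linarith [b1.1, b1.2, b2.1, b2.2]
    have hsum : ∑ t ∈ Finset.range s, 2^t * (if x t then (1:ℤ) else 0)
        = ∑ t ∈ Finset.range s, 2^t * (if x' t then (1:ℤ) else 0) := by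
      rw [hbit] at h
      linarith
    by_cases hts : t < s
    · exact ih hsum t hts
    · have hts' : t = s := by omega
      rw [hts', hbit]

/-- Injectivity of the digit map on prefixes. -/
lemma adigit_inj (a : ℤ) {x x' : ℕ → Bool} (s : ℕ)
    (h : ∀ t < s, adigit a x t = adigit a x' t) : ∀ t < s, x t = x' t := by
  have h1 := carry_spec a x s
  have h2 := carry_spec a x' s
  have hy : ∑ t ∈ Finset.range s, 2^t * (if adigit a x t then (1:ℤ) else 0)
      = ∑ t ∈ Finset.range s, 2^t * (if adigit a x' t then (1:ℤ) else 0) :=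
    Finset.sum_congr rfl fun t ht => by rw [h t (Finset.mem_range.1 ht)]
  have bx := digit_sum_lt x s
  have bx' := digit_sum_lt x' s
  have key : ∑ t ∈ Finset.range s, 2^t * (if x t then (1:ℤ) else 0)
      = ∑ t ∈ Finset.range s, 2^t * (if x' t then (1:ℤ) else 0) := by
    have hd : ∑ t ∈ Finset.range s, 2^t * (if x t then (1:ℤ) else 0)
        - ∑ t ∈ Finset.range s, 2^t * (if x' t then (1:ℤ) else 0)
        = 2^s * (carry a x s - carry a x' s) := by
      rw [hy] at h1
      linarith
    rcases lt_trichotomy (carry a x s) (carry a x' s) with hc | hc | hc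
    · exfalso
      have hle : (2:ℤ)^s * (carry a x s - carry a x' s) ≤ 2^s * (-1) := by
        apply mul_le_mul_of_nonneg_left (by omega) (by positivity)
      have : (2:ℤ)^s * (-1) = -(2^s) := by ring
      linarith [bx.1, bx.2, bx'.1, bx'.2]
    · rw [hc] at hd
      linarith
    · exfalso
      have hle : (2:ℤ)^s * 1 ≤ 2^s * (carry a x s - carry a x' s) := by
        apply mul_le_mul_of_nonneg_left (by omega) (by positivity)
      have : (2:ℤ)^s * 1 = 2^s := by ring
      linarith [bx.1, bx.2, bx'.1, bx'.2]
  exact digit_sum_inj s key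

end S10

namespace S10
variable {N : ℕ}

/-- One-sided transport of goodness along a similarity mapping one dyadic system to another. -/
lemma isGoodCube_transport {r : ℕ} {γ : ℝ} {β βt : BSeq N} {k kt : ℤ} {p pt : Fin N → ℤ}
    {l : ℝ} {v : Euc N} (hl : l = (2:ℝ) ^ (k - kt))
    (hI : dyCube βt kt pt = affT l v '' dyCube β k p)
    (hJ : ∀ k₁ : ℤ, k₁ + (r:ℤ) ≤ k → ∃ E : Equiv.Perm (Fin N → ℤ),
      ∀ q, dyCube βt (k₁ - (k - kt)) (E q) = affT l v '' dyCube β k₁ q) :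
    IsGoodCube r γ β k p → IsGoodCube r γ βt kt pt := by
  intro hg k₂ q₂ hk₂
  have hlpos : 0 < l := by rw [hl]; positivity
  set k₁ := k₂ + (k - kt) with hk₁def
  have hk₁ : k₁ + (r:ℤ) ≤ k := by omega
  obtain ⟨E, hE⟩ := hJ k₁ hk₁
  have hgood := hg k₁ (E.symm q₂) hk₁
  have hcube : dyCube βt k₂ q₂ = affT l v '' dyCube β k₁ (E.symm q₂) := by
    have h1 := hE (E.symm q₂)
    rw [Equiv.apply_symm_apply] at h1
    have h2 : k₁ - (k - kt) = k₂ := by omega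
    rw [h2] at h1
    exact h1
  -- distances scale by l
  have hdist : setDist (dyCube βt kt pt) (frontier (dyCube βt k₂ q₂))
      = l * setDist (dyCube β k p) (frontier (dyCube β k₁ (E.symm q₂))) := by
    rw [hI, hcube, affT_frontier (ne_of_gt hlpos) v, setDist_affT (le_of_lt hlpos)]
  -- thresholds scale by l
  have h2k : (2:ℝ) ^ (-kt) = l * (2:ℝ) ^ (-k) := by
    rw [hl, ← zpow_add₀ (two_ne_zero : (2:ℝ) ≠ 0)]
    congr 1
    ring
  have h2k' : (2:ℝ) ^ (-k₂) = l * (2:ℝ) ^ (-k₁) := by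
    rw [hl, ← zpow_add₀ (two_ne_zero : (2:ℝ) ≠ 0)]
    congr 1
    omega
  have hthr : ((2:ℝ) ^ (-kt)) ^ γ * ((2:ℝ) ^ (-k₂)) ^ (1 - γ)
      = l * (((2:ℝ) ^ (-k)) ^ γ * ((2:ℝ) ^ (-k₁)) ^ (1 - γ)) := by
    rw [h2k, h2k']
    have ha : (0:ℝ) ≤ l := le_of_lt hlpos
    have hb : (0:ℝ) ≤ (2:ℝ) ^ (-k) := by positivity
    have hc : (0:ℝ) ≤ (2:ℝ) ^ (-k₁) := by positivity
    rw [Real.mul_rpow ha hb, Real.mul_rpow ha hc]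
    have : l ^ γ * l ^ (1 - γ) = l := by
      rw [← Real.rpow_add hlpos, add_sub_cancel, Real.rpow_one]
    calc l ^ γ * ((2:ℝ)^(-k)) ^ γ * (l ^ (1-γ) * ((2:ℝ)^(-k₁)) ^ (1-γ))
        = (l ^ γ * l ^ (1-γ)) * (((2:ℝ)^(-k)) ^ γ * ((2:ℝ)^(-k₁)) ^ (1-γ)) := by ring
      _ = l * (((2:ℝ)^(-k)) ^ γ * ((2:ℝ)^(-k₁)) ^ (1-γ)) := by rw [this]
  rw [hdist, hthr]
  exact (mul_lt_mul_iff_right₀ hlpos).2 hgood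

/-- Translation data for two `β`'s agreeing below scale `k` (on `j ≤ k`). -/
lemma dyCube_translate {β β' : BSeq N} {k k₁ : ℤ} (hk₁ : k₁ ≤ k)
    (h : ∀ j, k₁ < j → j ≤ k → β j = β' j) (q : Fin N → ℤ) :
    dyCube β' k₁ q
      = affT 1 (fun i => betaShift β' k i - betaShift β k i) '' dyCube β k₁ q := by
  unfold dyCube
  rw [affT_image_cube one_pos, one_mul]
  have hcor : (fun i => (q i : ℝ) * (2:ℝ)^(-k₁) + betaShift β' k₁ i)
      = affT 1 (fun i => betaShift β' k i - betaShift β k i)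
        (fun i => (q i : ℝ) * (2:ℝ)^(-k₁) + betaShift β k₁ i) := by
    funext i
    show (q i : ℝ) * _ + betaShift β' k₁ i
        = 1 * ((q i : ℝ) * _ + betaShift β k₁ i) + (betaShift β' k i - betaShift β k i)
    rw [betaShift_split β hk₁ i, betaShift_split β' hk₁ i]
    have hs : ∑ j ∈ Finset.Ioc k₁ k, (2:ℝ) ^ (-j) * (if β j i then 1 else 0)
        = ∑ j ∈ Finset.Ioc k₁ k, (2:ℝ) ^ (-j) * (if β' j i then 1 else 0) := by
      apply Finset.sum_congr rfl
      intro j hj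
      rw [Finset.mem_Ioc] at hj
      rw [h j hj.1 hj.2]
    rw [hs]
    ring
  rw [hcor]

/-- Goodness only depends on the coordinates `β_j`, `j ≤ k`. -/
lemma isGoodCube_congr {r : ℕ} {γ : ℝ} {β β' : BSeq N} {k : ℤ} {p : Fin N → ℤ}
    (h : ∀ j, j ≤ k → β j = β' j) :
    IsGoodCube r γ β k p ↔ IsGoodCube r γ β' k p := by
  have hmain : ∀ (b b' : BSeq N), (∀ j, j ≤ k → b j = b' j) →
      IsGoodCube r γ b k p → IsGoodCube r γ b' k p := by
    intro b b' hbb hg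
    refine isGoodCube_transport (l := 1) (v := fun i => betaShift b' k i - betaShift b k i)
      (by rw [sub_self, zpow_zero]) ?_ ?_ hg
    · exact dyCube_translate le_rfl (fun j h1 h2 => hbb j h2) p
    · intro k₁ hk₁
      refine ⟨Equiv.refl _, fun q => ?_⟩
      have h2 : k₁ - (k - k) = k₁ := by omega
      rw [h2]
      exact dyCube_translate (by omega) (fun j h1 h2 => hbb j h2) q
  exact ⟨hmain β β' h, hmain β' β (fun j hj => (h j hj).symm)⟩

end S10

namespace S10
variable {N : ℕ}

/-- The rescaling-translation map on binary sequences: above scale `k'` it is the index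
shift by `k - k'`; at and below, it adds the integer vector `p' - p` 2-adically to the
digit stream `t ↦ β (k - t)`. -/
def Phi (k k' : ℤ) (p p' : Fin N → ℤ) (β : BSeq N) : BSeq N :=
  fun j i => if k' < j then β (j + (k - k')) i
    else adigit (p' i - p i) (fun t => β (k - t) i) (k' - j).toNat

lemma betaShift_Phi_top (k k' : ℤ) (p p' : Fin N → ℤ) (β : BSeq N) (i : Fin N) :
    betaShift (Phi k k' p p' β) k' i = (2:ℝ)^(k - k') * betaShift β k i := by
  apply betaShift_of_shift
  intro j hj
  funext i'
  simp only [Phi, if_pos hj]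

lemma cast_digit_sum (x : ℕ → Bool) (s : ℕ) :
    ((∑ t ∈ Finset.range s, 2^t * (if x t then (1:ℤ) else 0) : ℤ) : ℝ)
      = ∑ t ∈ Finset.range s, (2:ℝ)^t * (if x t then 1 else 0) := by
  push_cast [apply_ite (Int.cast : ℤ → ℝ)]
  rfl

/-- The central corner correspondence: the similarity `x ↦ 2^(k-k') x + (p'-p) 2^(-k')`
maps cubes of `𝒟^β` at scale `k - s` to cubes of `𝒟^(Φβ)` at scale `k' - s`, shifting
positions by the carry vector. -/
lemma dyCube_Phi (k k' : ℤ) (p p' : Fin N → ℤ) (β : BSeq N) (s : ℕ) (q : Fin N → ℤ) :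
    dyCube (Phi k k' p p' β) (k' - s)
        (fun i => q i + carry (p' i - p i) (fun t => β (k - t) i) s)
      = affT ((2:ℝ)^(k - k')) (fun i => ((p' i - p i : ℤ) : ℝ) * (2:ℝ)^(-k'))
          '' dyCube β (k - s) q := by
  have hlpos : (0:ℝ) < (2:ℝ)^(k - k') := by positivity
  unfold dyCube
  rw [affT_image_cube hlpos]
  have hlen : (2:ℝ)^(k - k') * (2:ℝ)^(-(k - (s:ℤ))) = (2:ℝ)^(-(k' - (s:ℤ))) := by
    rw [← zpow_add₀ (two_ne_zero : (2:ℝ) ≠ 0)]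
    congr 1
    omega
  rw [hlen]
  have hcor : (fun i => ((q i + carry (p' i - p i) (fun t => β (k - t) i) s : ℤ) : ℝ)
        * (2:ℝ)^(-(k' - (s:ℤ))) + betaShift (Phi k k' p p' β) (k' - s) i)
      = affT ((2:ℝ)^(k - k')) (fun i => ((p' i - p i : ℤ) : ℝ) * (2:ℝ)^(-k'))
        (fun i => ((q i : ℤ) : ℝ) * (2:ℝ)^(-(k - (s:ℤ))) + betaShift β (k - s) i) := by
    funext i
    set x : ℕ → Bool := fun t => β (k - t) i with hx
    set a : ℤ := p' i - p i with ha
    show ((q i + carry a x s : ℤ) : ℝ) * (2:ℝ)^(-(k' - (s:ℤ)))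
        + betaShift (Phi k k' p p' β) (k' - s) i
      = (2:ℝ)^(k - k') * (((q i : ℤ) : ℝ) * (2:ℝ)^(-(k - (s:ℤ))) + betaShift β (k - s) i)
        + ((a : ℤ) : ℝ) * (2:ℝ)^(-k')
    -- split the two beta shifts
    rw [betaShift_split β (by omega : k - (s:ℤ) ≤ k) i,
      betaShift_split (Phi k k' p p' β) (by omega : k' - (s:ℤ) ≤ k') i,
      sum_Ioc_eq β k s i, sum_Ioc_eq (Phi k k' p p' β) k' s i,
      betaShift_Phi_top k k' p p' β i]
    -- identify the digits of Φβ below k'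
    have hdig : ∑ t ∈ Finset.range s, (2:ℝ)^t * (if Phi k k' p p' β (k' - t) i then 1 else 0)
        = ∑ t ∈ Finset.range s, (2:ℝ)^t * (if adigit a x t then 1 else 0) := by
      apply Finset.sum_congr rfl
      intro t _
      have h1 : Phi k k' p p' β (k' - t) i = adigit a x t := by
        simp only [Phi]
        rw [if_neg (by omega)]
        have : (k' - (k' - (t:ℤ))).toNat = t := by omega
        rw [this]
      rw [h1]
    rw [hdig]
    -- the key integer identity, cast to ℝ
    have hkey : ((a : ℤ) : ℝ) + ∑ t ∈ Finset.range s, (2:ℝ)^t * (if x t then 1 else 0)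
        = (2:ℝ)^s * ((carry a x s : ℤ) : ℝ)
          + ∑ t ∈ Finset.range s, (2:ℝ)^t * (if adigit a x t then 1 else 0) := by
      have h := carry_spec a x s
      have hc := congrArg (Int.cast : ℤ → ℝ) h
      push_cast at hc
      exact hc
    have e1 : (2:ℝ)^(-(k' - (s:ℤ))) = (2:ℝ)^(-k') * (2:ℝ)^(s:ℕ) := by
      rw [← zpow_natCast (2:ℝ) s, ← zpow_add₀ (two_ne_zero : (2:ℝ) ≠ 0)]
      congr 1
      omega
    have e2 : (2:ℝ)^(k - k') * (2:ℝ)^(-(k - (s:ℤ))) = (2:ℝ)^(-k') * (2:ℝ)^(s:ℕ) := by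
      rw [hlen, e1]
    have e3 : (2:ℝ)^(k - k') * (2:ℝ)^(-k) = (2:ℝ)^(-k') := by
      rw [← zpow_add₀ (two_ne_zero : (2:ℝ) ≠ 0)]
      congr 1
      omega
    push_cast
    push_cast at hkey
    linear_combination (((q i : ℝ)) + ((carry a x s : ℤ) : ℝ)) * e1 - ((q i : ℝ)) * e2
      - (∑ t ∈ Finset.range s, (2:ℝ)^t * (if x t then 1 else 0)) * e3
      - (2:ℝ)^(-k') * hkey
  rw [hcor]

end S10

namespace S10
variable {N : ℕ}

lemma dyCube_Phi_zero (k k' : ℤ) (p p' : Fin N → ℤ) (β : BSeq N) :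
    dyCube (Phi k k' p p' β) k' p'
      = affT ((2:ℝ)^(k - k')) (fun i => ((p' i - p i : ℤ) : ℝ) * (2:ℝ)^(-k'))
          '' dyCube β k p := by
  have h := dyCube_Phi k k' p p' β 0 p
  have h1 : k' - ((0:ℕ):ℤ) = k' := by omega
  have h2 : k - ((0:ℕ):ℤ) = k := by omega
  rw [h1, h2] at h
  have h3 : (fun i => p i + carry (p' i - p i) (fun t => β (k - t) i) 0) = p' := by
    funext i
    show p i + (p' i - p i) = p' i
    omega
  rw [h3] at h
  exact h

lemma isGoodCube_Phi {r : ℕ} {γ : ℝ} (k k' : ℤ) (p p' : Fin N → ℤ) (β : BSeq N) :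
    IsGoodCube r γ β k p ↔ IsGoodCube r γ (Phi k k' p p' β) k' p' := by
  set l : ℝ := (2:ℝ)^(k - k') with hldef
  have hl0 : l ≠ 0 := by positivity
  set v : Euc N := fun i => ((p' i - p i : ℤ) : ℝ) * (2:ℝ)^(-k') with hvdef
  have hJfwd : ∀ k₁ : ℤ, k₁ + (r:ℤ) ≤ k → ∃ E : Equiv.Perm (Fin N → ℤ),
      ∀ q, dyCube (Phi k k' p p' β) (k₁ - (k - k')) (E q) = affT l v '' dyCube β k₁ q := by
    intro k₁ hk₁
    set s : ℕ := (k - k₁).toNat with hsdef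
    have hs : k₁ = k - (s:ℤ) := by omega
    refine ⟨Equiv.addRight (fun i => carry (p' i - p i) (fun t => β (k - t) i) s), fun q => ?_⟩
    have hE : (Equiv.addRight (fun i => carry (p' i - p i) (fun t => β (k - t) i) s)) q
        = fun i => q i + carry (p' i - p i) (fun t => β (k - t) i) s := rfl
    rw [hE]
    have h1 : k₁ - (k - k') = k' - (s:ℤ) := by omega
    rw [h1, hs]
    exact dyCube_Phi k k' p p' β s q
  constructor
  · intro hg
    exact isGoodCube_transport rfl (dyCube_Phi_zero k k' p p' β) hJfwd hg
  · intro hg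
    refine isGoodCube_transport (l := l⁻¹) (v := fun i => -(v i) / l)
      ?_ ?_ ?_ hg
    · rw [hldef, ← zpow_neg]
      congr 1
      ring
    · rw [dyCube_Phi_zero k k' p p' β, affT_image_image hl0]
    · intro k₂ hk₂
      obtain ⟨E, hE⟩ := hJfwd (k₂ + (k - k')) (by omega)
      refine ⟨E.symm, fun q => ?_⟩
      have h1 := hE (E.symm q)
      rw [Equiv.apply_symm_apply] at h1
      have h2 : k₂ + (k - k') - (k - k') = k₂ := by omega
      rw [h2] at h1
      have h3 : k₂ - (k' - k) = k₂ + (k - k') := by omega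
      rw [h3, h1, affT_image_image hl0]

end S10

namespace S10
variable {N : ℕ}

/-- Finite cylinder sets. -/
def cylSet (s : Finset ℤ) (b : ℤ → Fin N → Bool) : Set (BSeq N) := {β | ∀ j ∈ s, β j = b j}

/-- Cylinders with base inside `K`. -/
def cylOn (N : ℕ) (K : Set ℤ) : Set (Set (BSeq N)) :=
  {C | ∃ s : Finset ℤ, ↑s ⊆ K ∧ ∃ b : ℤ → Fin N → Bool, C = cylSet s b}

lemma measurableSet_cylSet (s : Finset ℤ) (b : ℤ → Fin N → Bool) :
    MeasurableSet (cylSet (N := N) s b) := by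
  have h : cylSet (N := N) s b = ⋂ (j : ℤ) (_ : j ∈ s), (fun β : BSeq N => β j) ⁻¹' {b j} := by
    ext β; simp [cylSet]
  rw [h]
  exact MeasurableSet.iInter fun j => MeasurableSet.iInter fun _ =>
    (measurable_pi_apply j) (measurableSet_singleton (b j))

lemma isPiSystem_cylOn (K : Set ℤ) : IsPiSystem (cylOn N K) := by
  classical
  rintro C1 ⟨s1, hs1, b1, rfl⟩ C2 ⟨s2, hs2, b2, rfl⟩ hne
  obtain ⟨β0, hβ01, hβ02⟩ := hne
  refine ⟨s1 ∪ s2, ?_, fun j => if j ∈ s1 then b1 j else b2 j, ?_⟩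
  · intro j hj
    rcases Finset.mem_union.1 (by exact_mod_cast hj) with h | h
    · exact hs1 h
    · exact hs2 h
  · ext β
    constructor
    · rintro ⟨h1, h2⟩ j hj
      show β j = if j ∈ s1 then b1 j else b2 j
      rcases Finset.mem_union.1 hj with h | h
      · rw [if_pos h]; exact h1 j h
      · by_cases h' : j ∈ s1
        · rw [if_pos h']; exact h1 j h'
        · rw [if_neg h']; exact h2 j h
    · intro h
      constructor
      · intro j hj
        have h1 : β j = if j ∈ s1 then b1 j else b2 j := h j (Finset.mem_union_left _ hj)
        rwa [if_pos hj] at h1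
      · intro j hj
        by_cases h' : j ∈ s1
        · have h1 : β j = if j ∈ s1 then b1 j else b2 j := h j (Finset.mem_union_left _ h')
          rw [if_pos h'] at h1
          have e12 : b1 j = b2 j := by rw [← hβ01 j h', hβ02 j hj]
          rw [h1, e12]
        · have h1 : β j = if j ∈ s1 then b1 j else b2 j := h j (Finset.mem_union_right _ hj)
          rwa [if_neg h'] at h1

lemma singleton_cyl_mem (K : Set ℤ) (j : ℤ) (hj : j ∈ K) (c : Fin N → Bool) :
    ((fun β : BSeq N => β j) ⁻¹' {c}) ∈ cylOn N K := by
  refine ⟨{j}, by simpa using hj, fun _ => c, ?_⟩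
  ext β; simp [cylSet]

lemma generateFrom_cylOn_univ :
    (inferInstance : MeasurableSpace (BSeq N)) =
      MeasurableSpace.generateFrom (cylOn N Set.univ) := by
  apply le_antisymm
  · show (⨆ j : ℤ, MeasurableSpace.comap (fun β : BSeq N => β j)
      (inferInstance : MeasurableSpace (Fin N → Bool))) ≤ _
    refine iSup_le fun j => ?_
    rw [MeasurableSpace.comap_le_iff_le_map]
    intro A _
    show MeasurableSet[MeasurableSpace.generateFrom (cylOn N Set.univ)]
      ((fun β : BSeq N => β j) ⁻¹' A)
    have h : (fun β : BSeq N => β j) ⁻¹' A = ⋃ c ∈ A, (fun β : BSeq N => β j) ⁻¹' {c} := by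
      ext β; simp
    rw [h]
    exact MeasurableSet.biUnion (Set.to_countable A) fun c _ =>
      MeasurableSpace.measurableSet_generateFrom (singleton_cyl_mem _ j (Set.mem_univ j) c)
  · exact MeasurableSpace.generateFrom_le (by rintro C ⟨s, _, b, rfl⟩; exact measurableSet_cylSet s b)

lemma coordLE_le (k : ℤ) : coordLE N k ≤ (inferInstance : MeasurableSpace (BSeq N)) :=
  measurable_iff_comap_le.mp
    (measurable_pi_lambda _ fun j => measurable_pi_apply (j : ℤ))

lemma coordGT_le (k : ℤ) : coordGT N k ≤ (inferInstance : MeasurableSpace (BSeq N)) :=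
  measurable_iff_comap_le.mp
    (measurable_pi_lambda _ fun j => measurable_pi_apply (j : ℤ))

lemma coordLE_eq (k : ℤ) :
    coordLE N k = MeasurableSpace.generateFrom (cylOn N (Set.Iic k)) := by
  apply le_antisymm
  · rw [coordLE]
    have hpi : (MeasurableSpace.pi : MeasurableSpace ({j : ℤ // j ≤ k} → Fin N → Bool))
        = ⨆ j' : {j : ℤ // j ≤ k}, MeasurableSpace.comap (fun g => g j') inferInstance := rfl
    show MeasurableSpace.comap _ MeasurableSpace.pi ≤ _
    rw [hpi, MeasurableSpace.comap_iSup]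
    refine iSup_le fun j' => ?_
    rw [MeasurableSpace.comap_comp]
    show MeasurableSpace.comap (fun β : BSeq N => β (j' : ℤ)) _ ≤ _
    rw [MeasurableSpace.comap_le_iff_le_map]
    intro A _
    show MeasurableSet[MeasurableSpace.generateFrom (cylOn N (Set.Iic k))]
      ((fun β : BSeq N => β (j' : ℤ)) ⁻¹' A)
    have h : (fun β : BSeq N => β (j' : ℤ)) ⁻¹' A
        = ⋃ c ∈ A, (fun β : BSeq N => β (j' : ℤ)) ⁻¹' {c} := by
      ext β; simp
    rw [h]
    exact MeasurableSet.biUnion (Set.to_countable A) fun c _ =>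
      MeasurableSpace.measurableSet_generateFrom
        (singleton_cyl_mem (Set.Iic k) (j' : ℤ) (Set.mem_Iic.mpr j'.2) c)
  · apply MeasurableSpace.generateFrom_le
    rintro C ⟨s, hs, b, rfl⟩
    refine ⟨{g : {j : ℤ // j ≤ k} → Fin N → Bool |
        ∀ j : {j : ℤ // j ≤ k}, (j : ℤ) ∈ s → g j = b (j : ℤ)}, ?_, ?_⟩
    · have h : {g : {j : ℤ // j ≤ k} → Fin N → Bool |
          ∀ j : {j : ℤ // j ≤ k}, (j : ℤ) ∈ s → g j = b (j : ℤ)}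
          = ⋂ (j : {j : ℤ // j ≤ k}) (_ : (j : ℤ) ∈ s),
            (fun g : {j : ℤ // j ≤ k} → Fin N → Bool => g j) ⁻¹' {b (j : ℤ)} := by
        ext g; simp
      rw [h]
      exact MeasurableSet.iInter fun j => MeasurableSet.iInter fun _ =>
        (measurable_pi_apply j) (measurableSet_singleton _)
    · ext β
      constructor
      · intro hβ j hj
        exact hβ ⟨j, hs hj⟩ hj
      · intro hβ j hj
        exact hβ (j : ℤ) hj

lemma coordGT_eq (k : ℤ) :
    coordGT N k = MeasurableSpace.generateFrom (cylOn N (Set.Ioi k)) := by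
  apply le_antisymm
  · rw [coordGT]
    have hpi : (MeasurableSpace.pi : MeasurableSpace ({j : ℤ // k < j} → Fin N → Bool))
        = ⨆ j' : {j : ℤ // k < j}, MeasurableSpace.comap (fun g => g j') inferInstance := rfl
    show MeasurableSpace.comap _ MeasurableSpace.pi ≤ _
    rw [hpi, MeasurableSpace.comap_iSup]
    refine iSup_le fun j' => ?_
    rw [MeasurableSpace.comap_comp]
    show MeasurableSpace.comap (fun β : BSeq N => β (j' : ℤ)) _ ≤ _
    rw [MeasurableSpace.comap_le_iff_le_map]
    intro A _
    show MeasurableSet[MeasurableSpace.generateFrom (cylOn N (Set.Ioi k))]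
      ((fun β : BSeq N => β (j' : ℤ)) ⁻¹' A)
    have h : (fun β : BSeq N => β (j' : ℤ)) ⁻¹' A
        = ⋃ c ∈ A, (fun β : BSeq N => β (j' : ℤ)) ⁻¹' {c} := by
      ext β; simp
    rw [h]
    exact MeasurableSet.biUnion (Set.to_countable A) fun c _ =>
      MeasurableSpace.measurableSet_generateFrom
        (singleton_cyl_mem (Set.Ioi k) (j' : ℤ) (Set.mem_Ioi.mpr j'.2) c)
  · apply MeasurableSpace.generateFrom_le
    rintro C ⟨s, hs, b, rfl⟩
    refine ⟨{g : {j : ℤ // k < j} → Fin N → Bool |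
        ∀ j : {j : ℤ // k < j}, (j : ℤ) ∈ s → g j = b (j : ℤ)}, ?_, ?_⟩
    · have h : {g : {j : ℤ // k < j} → Fin N → Bool |
          ∀ j : {j : ℤ // k < j}, (j : ℤ) ∈ s → g j = b (j : ℤ)}
          = ⋂ (j : {j : ℤ // k < j}) (_ : (j : ℤ) ∈ s),
            (fun g : {j : ℤ // k < j} → Fin N → Bool => g j) ⁻¹' {b (j : ℤ)} := by
        ext g; simp
      rw [h]
      exact MeasurableSet.iInter fun j => MeasurableSet.iInter fun _ =>
        (measurable_pi_apply j) (measurableSet_singleton _)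
    · ext β
      constructor
      · intro hβ j hj
        exact hβ ⟨j, hs hj⟩ hj
      · intro hβ j hj
        exact hβ (j : ℤ) hj

end S10

namespace S10
variable {N : ℕ}

open MeasureTheory

lemma prob_event (P : Measure (BSeq N)) (hP : IsBernoulli P) {ι : Type} [Fintype ι]
    (e : ι → ℤ) (he : Function.Injective e) (A : Finset (ι → Fin N → Bool)) :
    P {β | (fun j => β (e j)) ∈ A}
      = (A.card : ℝ≥0∞) * ((2:ℝ≥0∞) ^ N)⁻¹ ^ (Fintype.card ι) := by
  classical
  set bext : (ι → Fin N → Bool) → ℤ → Fin N → Bool :=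
    fun c j => if h : ∃ i, e i = j then c h.choose else (fun _ => false) with hbext
  have hchoose : ∀ (c : ι → Fin N → Bool) (i : ι), bext c (e i) = c i := by
    intro c i
    have h : ∃ i', e i' = e i := ⟨i, rfl⟩
    simp only [hbext, dif_pos h]
    exact congrArg c (he h.choose_spec)
  have hEc : ∀ c : ι → Fin N → Bool,
      {β : BSeq N | (fun j => β (e j)) = c} = cylSet (Finset.univ.image e) (bext c) := by
    intro c
    ext β
    constructor
    · intro hβ j hj
      obtain ⟨i, _, rfl⟩ := Finset.mem_image.1 hj
      rw [hchoose c i]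
      exact congrFun hβ i
    · intro hβ
      funext i
      have := hβ (e i) (Finset.mem_image_of_mem e (Finset.mem_univ i))
      rw [this, hchoose c i]
  have hmain : {β : BSeq N | (fun j => β (e j)) ∈ A}
      = ⋃ c ∈ A, {β : BSeq N | (fun j => β (e j)) = c} := by
    ext β
    simp only [Set.mem_setOf_eq, Set.mem_iUnion]
    constructor
    · intro h
      exact ⟨_, h, rfl⟩
    · rintro ⟨c, hc, h⟩
      rwa [h]
  rw [hmain, measure_biUnion_finset]
  · have hcard : ∀ c ∈ A, P {β : BSeq N | (fun j => β (e j)) = c}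
        = ((2:ℝ≥0∞) ^ N)⁻¹ ^ (Fintype.card ι) := by
      intro c _
      rw [hEc c]
      have := hP.2 (Finset.univ.image e) (bext c)
      rw [Finset.card_image_of_injective _ he, Finset.card_univ] at this
      exact this
    rw [Finset.sum_congr rfl hcard, Finset.sum_const, nsmul_eq_mul]
  · intro c1 h1 c2 h2 hne
    simp only [Function.onFun]
    apply Set.disjoint_left.mpr
    intro β hβ1 hβ2
    exact hne (hβ1.symm.trans hβ2)
  · intro c _
    rw [hEc c]
    exact measurableSet_cylSet _ _

/-- Counting functions with pinned values through a bijection. -/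
lemma card_pinned {m : ℕ} {X : Type} [Fintype X] [DecidableEq X]
    (g : (Fin m → X) → (Fin m → X)) (hg : Function.Bijective g)
    {ιT : Type} [Fintype ιT] (τ : ιT → Fin m) (hτ : Function.Injective τ) (bb : ιT → X) :
    Fintype.card {h : Fin m → X // ∀ j, g h (τ j) = bb j}
      = (Fintype.card X) ^ (m - Fintype.card ιT) := by
  classical
  have e1 : {h : Fin m → X // ∀ j, g h (τ j) = bb j}
      ≃ {v : Fin m → X // ∀ j, v (τ j) = bb j} :=
    (Equiv.ofBijective g hg).subtypeEquiv (fun h => Iff.rfl)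
  have e2 : {v : Fin m → X // ∀ j, v (τ j) = bb j}
      ≃ ({t : Fin m // t ∉ Set.range τ} → X) := by
    refine
      { toFun := fun v t => v.1 t
        invFun := fun w => ⟨fun t => if h : ∃ j, τ j = t then bb h.choose
            else w ⟨t, by simpa [Set.mem_range] using h⟩, ?_⟩
        left_inv := ?_
        right_inv := ?_ }
    · intro j
      have h : ∃ j', τ j' = τ j := ⟨j, rfl⟩
      simp only [dif_pos h]
      exact congrArg bb (hτ h.choose_spec)
    · rintro ⟨v, hv⟩
      apply Subtype.ext
      funext t
      simp only
      by_cases h : ∃ j, τ j = t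
      · rw [dif_pos h, ← hv h.choose, h.choose_spec]
      · rw [dif_neg h]
    · intro w
      funext t
      simp only
      rw [dif_neg (by simpa [Set.mem_range] using t.2)]
  rw [Fintype.card_congr (e1.trans e2), Fintype.card_fun]
  congr 1
  have h1 : Fintype.card {t : Fin m // t ∉ Set.range τ}
      = Fintype.card (Fin m) - Fintype.card {t : Fin m // t ∈ Set.range τ} :=
    Fintype.card_subtype_compl _
  rw [h1, Fintype.card_fin]
  congr 1
  rw [← Fintype.card_congr (Equiv.ofInjective τ hτ)]

/-- The vector digit map on prefixes of length `m`. -/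
def digitMap (a : Fin N → ℤ) (m : ℕ) (u : Fin m → Fin N → Bool) : Fin m → Fin N → Bool :=
  fun t i => adigit (a i) (fun t' => if h : t' < m then u ⟨t', h⟩ i else false) (t : ℕ)

lemma digitMap_bijective (a : Fin N → ℤ) (m : ℕ) :
    Function.Bijective (digitMap a m) := by
  rw [← Finite.injective_iff_bijective]
  intro u u' h
  funext t i
  have hpt : ∀ t0 : ℕ, t0 < m →
      (fun t' => if h : t' < m then u ⟨t', h⟩ i else false) t0
        = (fun t' => if h : t' < m then u' ⟨t', h⟩ i else false) t0 := by
    apply adigit_inj (a i)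
    intro t0 ht0
    have := congrFun (congrFun h ⟨t0, ht0⟩) i
    simpa [digitMap] using this
  have := hpt (t : ℕ) t.2
  simpa using this

lemma ennreal_pow_arith (N : ℕ) {m c1 c2 : ℕ} (h : c2 ≤ m) :
    ((2:ℝ≥0∞) ^ N) ^ (m - c2) * (((2:ℝ≥0∞) ^ N)⁻¹) ^ (c1 + m)
      = (((2:ℝ≥0∞) ^ N)⁻¹) ^ (c1 + c2) := by
  set x : ℝ≥0∞ := (2:ℝ≥0∞) ^ N with hx
  have hx0 : x ≠ 0 := by
    rw [hx]
    exact pow_ne_zero _ (by norm_num)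
  have hxt : x ≠ ⊤ := by
    rw [hx]
    exact ENNReal.pow_ne_top (by norm_num)
  have hexp : c1 + m = (c1 + c2) + (m - c2) := by omega
  rw [hexp, pow_add]
  have hcancel : x ^ (m - c2) * (x⁻¹) ^ (m - c2) = 1 := by
    rw [← mul_pow, ENNReal.mul_inv_cancel hx0 hxt, one_pow]
  calc x ^ (m - c2) * ((x⁻¹) ^ (c1 + c2) * (x⁻¹) ^ (m - c2))
      = (x⁻¹) ^ (c1 + c2) * (x ^ (m - c2) * (x⁻¹) ^ (m - c2)) := by ring
    _ = (x⁻¹) ^ (c1 + c2) := by rw [hcancel, mul_one]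

end S10

namespace S10
variable {N : ℕ}

open MeasureTheory

lemma measurable_phi (k k' : ℤ) (p p' : Fin N → ℤ) :
    Measurable (Phi (N := N) k k' p p') := by
  apply measurable_pi_lambda
  intro j
  apply measurable_pi_lambda
  intro i
  by_cases hj : k' < j
  · have h : (fun β : BSeq N => Phi k k' p p' β j i)
        = fun β : BSeq N => β (j + (k - k')) i := by
      funext β
      simp only [Phi, if_pos hj]
    rw [h]
    exact (measurable_pi_apply i).comp (measurable_pi_apply (j + (k - k')))
  · set T : ℕ := (k' - j).toNat with hT
    have h : (fun β : BSeq N => Phi k k' p p' β j i)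
        = (fun w : Fin (T+1) → Bool =>
            adigit (p' i - p i) (fun t => if h : t < T + 1 then w ⟨t, h⟩ else false) T)
          ∘ (fun β (t : Fin (T+1)) => β (k - (t : ℕ)) i) := by
      funext β
      simp only [Phi, if_neg hj, Function.comp_apply]
      apply adigit_congr
      intro t' ht'
      rw [dif_pos (by omega : t' < T + 1)]
    rw [h]
    exact (measurable_of_countable _).comp
      (measurable_pi_lambda _ fun t =>
        (measurable_pi_apply i).comp (measurable_pi_apply (k - (t : ℕ))))

/-- The product subtype splitting. -/
def subtypeProdSplit {A B : Type} (P : A → Prop) (Q : B → Prop) :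
    {pr : A × B // P pr.1 ∧ Q pr.2} ≃ {a // P a} × {b // Q b} where
  toFun x := (⟨x.1.1, x.2.1⟩, ⟨x.1.2, x.2.2⟩)
  invFun x := ⟨(x.1.1, x.2.1), x.1.2, x.2.2⟩
  left_inv x := rfl
  right_inv x := rfl

lemma phi_preimage_cyl (P : Measure (BSeq N)) (hP : IsBernoulli P) (k k' : ℤ)
    (p p' : Fin N → ℤ) (s : Finset ℤ) (b : ℤ → Fin N → Bool) :
    P (Phi k k' p p' ⁻¹' cylSet s b) = ((2:ℝ≥0∞) ^ N)⁻¹ ^ s.card := by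
  classical
  set a : Fin N → ℤ := fun i => p' i - p i with ha
  set s₁ := s.filter (fun j => k' < j) with hs₁
  set s₂ := s.filter (fun j => ¬ k' < j) with hs₂
  set m : ℕ := (s₂.sup (fun j => (k' - j).toNat)) + 1 with hm
  have hmlt : ∀ j ∈ s₂, (k' - j).toNat < m := fun j hj =>
    Nat.lt_succ_of_le (Finset.le_sup (f := fun j => (k' - j).toNat) hj)
  have hs₁k : ∀ j ∈ s₁, k' < j := fun j hj => (Finset.mem_filter.1 hj).2
  have hs₂k : ∀ j ∈ s₂, j ≤ k' := fun j hj => by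
    have := (Finset.mem_filter.1 hj).2; omega
  set e : ({j // j ∈ s₁} ⊕ Fin m) → ℤ :=
    Sum.elim (fun j => (j : ℤ) + (k - k')) (fun t => k - ((t : ℕ) : ℤ)) with he
  have heinj : Function.Injective e := by
    rintro (j1 | t1) (j2 | t2) h
    · simp only [he, Sum.elim_inl] at h
      have h2 : (j1 : ℤ) = j2 := by omega
      exact congrArg Sum.inl (Subtype.ext h2)
    · exfalso
      simp only [he, Sum.elim_inl, Sum.elim_inr] at h
      have h1 := hs₁k _ j1.2
      have h2 : (0:ℤ) ≤ ((t2 : ℕ) : ℤ) := Int.natCast_nonneg _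
      omega
    · exfalso
      simp only [he, Sum.elim_inl, Sum.elim_inr] at h
      have h1 := hs₁k _ j2.2
      have h2 : (0:ℤ) ≤ ((t1 : ℕ) : ℤ) := Int.natCast_nonneg _
      omega
    · simp only [he, Sum.elim_inr] at h
      have h2 : (t1 : ℕ) = (t2 : ℕ) := by omega
      exact congrArg Sum.inr (Fin.ext h2)
  set cond : (({j // j ∈ s₁} ⊕ Fin m) → Fin N → Bool) → Prop := fun c =>
    (∀ j : {j // j ∈ s₁}, c (Sum.inl j) = b (j : ℤ)) ∧
    (∀ j : {j // j ∈ s₂}, digitMap a m (fun t => c (Sum.inr t))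
        ⟨(k' - (j : ℤ)).toNat, hmlt _ j.2⟩ = b (j : ℤ)) with hcond
  set A : Finset (({j // j ∈ s₁} ⊕ Fin m) → Fin N → Bool) := Finset.univ.filter cond with hA
  -- rewrite the event
  have hset : Phi k k' p p' ⁻¹' cylSet s b = {β : BSeq N | (fun j => β (e j)) ∈ A} := by
    ext β
    simp only [Set.mem_preimage, cylSet, Set.mem_setOf_eq, hA, Finset.mem_filter,
      Finset.mem_univ, true_and]
    have hPhi₁ : ∀ j, k' < j → Phi k k' p p' β j = β (j + (k - k')) := by
      intro j hj
      funext i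
      simp only [Phi, if_pos hj]
    have hPhi₂ : ∀ j (hj : j ∈ s₂), Phi k k' p p' β j
        = digitMap a m (fun t => β (e (Sum.inr t))) ⟨(k' - j).toNat, hmlt _ hj⟩ := by
      intro j hj
      funext i
      simp only [Phi, if_neg (by have := hs₂k j hj; omega : ¬ k' < j), digitMap]
      apply adigit_congr
      intro t' ht'
      have ht'm : t' < m := by
        have := hmlt j hj
        omega
      rw [dif_pos ht'm]
      rfl
    constructor
    · intro h
      constructor
      · rintro ⟨j, hj⟩
        have hjs : j ∈ s := (Finset.mem_filter.1 hj).1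
        have := h j hjs
        rw [hPhi₁ j (hs₁k j hj)] at this
        exact this
      · rintro ⟨j, hj⟩
        have hjs : j ∈ s := (Finset.mem_filter.1 hj).1
        have h1 := h j hjs
        rw [hPhi₂ j hj] at h1
        exact h1
    · rintro ⟨h1, h2⟩ j hj
      by_cases hjk : k' < j
      · have hjs₁ : j ∈ s₁ := Finset.mem_filter.2 ⟨hj, hjk⟩
        rw [hPhi₁ j hjk]
        exact h1 ⟨j, hjs₁⟩
      · have hjs₂ : j ∈ s₂ := Finset.mem_filter.2 ⟨hj, hjk⟩
        rw [hPhi₂ j hjs₂]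
        exact h2 ⟨j, hjs₂⟩
  rw [hset, prob_event P hP e heinj A]
  set τ : {j // j ∈ s₂} → Fin m := fun j => ⟨(k' - (j : ℤ)).toNat, hmlt _ j.2⟩ with hτdef
  have hτ : Function.Injective τ := by
    rintro ⟨j1, hj1⟩ ⟨j2, hj2⟩ h
    have h2 : (k' - j1).toNat = (k' - j2).toNat := congrArg Fin.val h
    have h3 := hs₂k j1 hj1
    have h4 := hs₂k j2 hj2
    apply Subtype.ext
    show j1 = j2
    omega
  -- compute the cardinality of A
  have hAcard : A.card = (2 ^ N) ^ (m - s₂.card) := by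
    have h1 : A.card = Fintype.card {c // cond c} := (Fintype.card_subtype cond).symm
    rw [h1]
    have e0 : {c // cond c} ≃
        {pr : ({j // j ∈ s₁} → Fin N → Bool) × (Fin m → Fin N → Bool) //
          (∀ j : {j // j ∈ s₁}, pr.1 j = b (j : ℤ)) ∧
          (∀ j : {j // j ∈ s₂}, digitMap a m pr.2 (τ j) = b (j : ℤ))} :=
      (Equiv.sumArrowEquivProdArrow _ _ _).subtypeEquiv (fun c => Iff.rfl)
    rw [Fintype.card_congr (e0.trans (subtypeProdSplit
      (fun g : {j // j ∈ s₁} → Fin N → Bool => ∀ j : {j // j ∈ s₁}, g j = b (j : ℤ))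
      (fun h : Fin m → Fin N → Bool => ∀ j : {j // j ∈ s₂}, digitMap a m h (τ j) = b (j : ℤ)))),
      Fintype.card_prod]
    have hc1 : Fintype.card {g : {j // j ∈ s₁} → Fin N → Bool //
        ∀ j : {j // j ∈ s₁}, g j = b (j : ℤ)} = 1 := by
      apply Fintype.card_eq_one_iff.mpr
      exact ⟨⟨fun j => b (j : ℤ), fun j => rfl⟩, fun y => Subtype.ext (funext y.2)⟩
    have hc2 : Fintype.card {h : Fin m → Fin N → Bool //
        ∀ j : {j // j ∈ s₂}, digitMap a m h (τ j) = b (j : ℤ)}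
        = (2 ^ N) ^ (m - s₂.card) := by
      rw [card_pinned (digitMap a m) (digitMap_bijective a m) τ hτ (fun j => b (j : ℤ))]
      congr 1
      · rw [Fintype.card_fun, Fintype.card_bool, Fintype.card_fin]
      · rw [Fintype.card_coe]
    rw [hc1, hc2, one_mul]
  have hs₂m : s₂.card ≤ m := by
    have h1 : Fintype.card {j // j ∈ s₂} ≤ Fintype.card (Fin m) :=
      Fintype.card_le_of_injective τ hτ
    rwa [Fintype.card_coe, Fintype.card_fin] at h1
  have hcardsum : s₁.card + s₂.card = s.card := by
    rw [hs₁, hs₂]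
    exact Finset.card_filter_add_card_filter_not _
  rw [hAcard]
  have hcast : (((2 ^ N) ^ (m - s₂.card) : ℕ) : ℝ≥0∞) = ((2:ℝ≥0∞) ^ N) ^ (m - s₂.card) := by
    push_cast
    rfl
  rw [hcast]
  have hι : Fintype.card ({j // j ∈ s₁} ⊕ Fin m) = s₁.card + m := by
    rw [Fintype.card_sum, Fintype.card_coe, Fintype.card_fin]
  rw [hι, ennreal_pow_arith N hs₂m, hcardsum]

end S10

namespace S10
variable {N : ℕ}

open MeasureTheory ProbabilityTheory

lemma prob_cyl {P : Measure (BSeq N)} (hP : IsBernoulli P) (s : Finset ℤ)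
    (b : ℤ → Fin N → Bool) : P (cylSet s b) = ((2:ℝ≥0∞) ^ N)⁻¹ ^ s.card := hP.2 s b

lemma phi_map_eq (P : Measure (BSeq N)) (hP : IsBernoulli P) (k k' : ℤ) (p p' : Fin N → ℤ) :
    P.map (Phi k k' p p') = P := by
  haveI := hP.1
  haveI : IsProbabilityMeasure (P.map (Phi k k' p p')) :=
    Measure.isProbabilityMeasure_map (measurable_phi k k' p p').aemeasurable
  apply ext_of_generate_finite (cylOn N Set.univ) generateFrom_cylOn_univ (isPiSystem_cylOn _)
  · rintro C ⟨s, _, b, rfl⟩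
    rw [Measure.map_apply (measurable_phi k k' p p') (measurableSet_cylSet s b),
      phi_preimage_cyl P hP k k' p p' s b]
    exact (prob_cyl hP s b).symm
  · simp [measure_univ]

lemma indep_coord (P : Measure (BSeq N)) (hP : IsBernoulli P) (k : ℤ) :
    Indep (coordLE N k) (coordGT N k) P := by
  classical
  haveI := hP.1
  apply IndepSets.indep (coordLE_le k) (coordGT_le k) (isPiSystem_cylOn _) (isPiSystem_cylOn _)
    (coordLE_eq k) (coordGT_eq k)
  rintro C1 C2 ⟨s1, hs1, b1, rfl⟩ ⟨s2, hs2, b2, rfl⟩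
  have hdisj : Disjoint s1 s2 := by
    rw [Finset.disjoint_left]
    intro j h1 h2
    have ha := hs1 h1
    have hb := hs2 h2
    simp only [Set.mem_Iic, Set.mem_Ioi] at ha hb
    omega
  have hint : cylSet s1 b1 ∩ cylSet s2 b2
      = cylSet (s1 ∪ s2) (fun j => if j ∈ s1 then b1 j else b2 j) := by
    ext β
    constructor
    · rintro ⟨h1, h2⟩ j hj
      show β j = if j ∈ s1 then b1 j else b2 j
      rcases Finset.mem_union.1 hj with h | h
      · rw [if_pos h]; exact h1 j h
      · have hns : j ∉ s1 := Finset.disjoint_right.1 hdisj h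
        rw [if_neg hns]; exact h2 j h
    · intro h
      constructor
      · intro j hj
        have h1 : β j = if j ∈ s1 then b1 j else b2 j := h j (Finset.mem_union_left _ hj)
        rwa [if_pos hj] at h1
      · intro j hj
        have hns : j ∉ s1 := Finset.disjoint_right.1 hdisj hj
        have h1 : β j = if j ∈ s1 then b1 j else b2 j := h j (Finset.mem_union_right _ hj)
        rwa [if_neg hns] at h1
  refine Filter.Eventually.of_forall fun _ => ?_
  simp only [Kernel.const_apply]
  rw [hint, prob_cyl hP, prob_cyl hP, prob_cyl hP,
    Finset.card_union_of_disjoint hdisj, pow_add]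

/-- The condition at a single coarser cube depends only on the scales in `Ioc k₁ k`. -/
lemma setDist_congr {β β' : BSeq N} {k k₁ : ℤ} (hk₁ : k₁ ≤ k) (p q : Fin N → ℤ)
    (h : ∀ j, k₁ < j → j ≤ k → β j = β' j) :
    setDist (dyCube β' k p) (frontier (dyCube β' k₁ q))
      = setDist (dyCube β k p) (frontier (dyCube β k₁ q)) := by
  have h1 : dyCube β' k p
      = affT 1 (fun i => betaShift β' k i - betaShift β k i) '' dyCube β k p :=
    dyCube_translate le_rfl (fun j hj1 hj2 => absurd hj1 (by omega)) p
  have h2 : dyCube β' k₁ q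
      = affT 1 (fun i => betaShift β' k i - betaShift β k i) '' dyCube β k₁ q :=
    dyCube_translate hk₁ h q
  rw [h1, h2, affT_frontier one_ne_zero, setDist_affT zero_le_one, one_mul]

lemma good_measurable (r : ℕ) (γ : ℝ) (k : ℤ) (p : Fin N → ℤ) :
    MeasurableSet[coordLE N k] {β : BSeq N | IsGoodCube r γ β k p} := by
  classical
  have hdecomp : {β : BSeq N | IsGoodCube r γ β k p}
      = ⋂ (k₁ : ℤ) (q : Fin N → ℤ) (_ : k₁ + (r:ℤ) ≤ k),
          {β : BSeq N | ((2:ℝ)^(-k))^γ * ((2:ℝ)^(-k₁))^(1-γ)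
            < setDist (dyCube β k p) (frontier (dyCube β k₁ q))} := by
    ext β
    simp only [Set.mem_setOf_eq, Set.mem_iInter]
    exact ⟨fun h k₁ q hk => h k₁ q hk, fun h k₁ q hk => h k₁ q hk⟩
  rw [hdecomp]
  apply MeasurableSet.iInter
  intro k₁
  apply MeasurableSet.iInter
  intro q
  apply MeasurableSet.iInter
  intro hk₁
  have hk₁k : k₁ ≤ k := by omega
  haveI : Finite ↥(Set.Ioc k₁ k) := (Set.finite_Ioc k₁ k).to_subtype
  set ext2 : (↥(Set.Ioc k₁ k) → Fin N → Bool) → BSeq N :=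
    fun g j => if hj : j ∈ Set.Ioc k₁ k then g ⟨j, hj⟩ else fun _ => false with hext2
  set R : BSeq N → (↥(Set.Ioc k₁ k) → Fin N → Bool) := fun β j => β (j : ℤ) with hR
  have hsetEq : {β : BSeq N | ((2:ℝ)^(-k))^γ * ((2:ℝ)^(-k₁))^(1-γ)
        < setDist (dyCube β k p) (frontier (dyCube β k₁ q))}
      = R ⁻¹' {g | ((2:ℝ)^(-k))^γ * ((2:ℝ)^(-k₁))^(1-γ)
        < setDist (dyCube (ext2 g) k p) (frontier (dyCube (ext2 g) k₁ q))} := by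
    ext β
    simp only [Set.mem_setOf_eq, Set.mem_preimage]
    have hagree : ∀ j, k₁ < j → j ≤ k → β j = ext2 (R β) j := by
      intro j hj1 hj2
      simp only [hext2, hR]
      rw [dif_pos (Set.mem_Ioc.2 ⟨hj1, hj2⟩)]
    rw [setDist_congr hk₁k p q hagree]
  rw [hsetEq]
  have hρ : Measurable[coordLE N k]
      (fun (β : BSeq N) (j : {j : ℤ // j ≤ k}) => β (j : ℤ)) :=
    measurable_iff_comap_le.mpr le_rfl
  have houter : Measurable (fun (g : {j : ℤ // j ≤ k} → Fin N → Bool)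
      (j : ↥(Set.Ioc k₁ k)) => g ⟨(j : ℤ), j.2.2⟩) :=
    measurable_pi_lambda _ (fun j => measurable_pi_apply _)
  have hRmeas : Measurable[coordLE N k] R := houter.comp hρ
  exact hRmeas ((Set.toFinite _).measurableSet)

lemma good_prob_eq (P : Measure (BSeq N)) (hP : IsBernoulli P) (r : ℕ) (γ : ℝ)
    (k : ℤ) (p : Fin N → ℤ) (k' : ℤ) (p' : Fin N → ℤ) :
    P {β | IsGoodCube r γ β k p} = P {β | IsGoodCube r γ β k' p'} := by
  have hpre : {β : BSeq N | IsGoodCube r γ β k p}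
      = Phi k k' p p' ⁻¹' {β | IsGoodCube r γ β k' p'} := by
    ext β
    exact isGoodCube_Phi k k' p p' β
  rw [hpre, ← Measure.map_apply (measurable_phi k k' p p')
    (coordLE_le k' _ (good_measurable r γ k' p')),
    phi_map_eq P hP k k' p p']

end S10


/-- goodness of `I ∔ β` depends only on the coordinates `β_j` with
`2^{-j} ≥ ℓ(I)`; its probability `π_good` is independent of `I`; and goodness is
independent of any bounded random variable depending only on the coordinates `β_j`
with `2^{-j} < ℓ(I)`. -/
theorem statement_10 (N : ℕ) (r : ℕ) (hr : 1 ≤ r) (γ : ℝ) (hγ0 : 0 < γ)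
    (hγ2 : γ < 1/2) (P : Measure (BSeq N)) (hP : IsBernoulli P)
    (k : ℤ) (p : Fin N → ℤ) :
    MeasurableSet[coordLE N k] {β : BSeq N | IsGoodCube r γ β k p} ∧
    (∀ (k' : ℤ) (p' : Fin N → ℤ),
      P {β | IsGoodCube r γ β k p} = P {β | IsGoodCube r γ β k' p'}) ∧
    (∀ X : BSeq N → ℝ, (∃ M, ∀ β, |X β| ≤ M) → Measurable[coordGT N k] X →
      ∫ β, X β * Set.indicator {β' | IsGoodCube r γ β' k p} (fun _ => (1:ℝ)) β ∂P =
        (P {β | IsGoodCube r γ β k p}).toReal * ∫ β, X β ∂P) := by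
  haveI := hP.1
  classical
  refine ⟨S10.good_measurable r γ k p, fun k' p' => S10.good_prob_eq P hP r γ k p k' p', ?_⟩
  intro X hbd hXmeas
  obtain ⟨M, hM⟩ := hbd
  set G : Set (BSeq N) := {β' | IsGoodCube r γ β' k p} with hGdef
  have hGle := S10.good_measurable (N := N) r γ k p
  have hG : MeasurableSet G := S10.coordLE_le k _ hGle
  set Y : BSeq N → ℝ := G.indicator (fun _ => 1) with hYdef
  have hYm : Measurable[coordLE N k] Y :=
    Measurable.indicator measurable_const hGle
  have hXm : Measurable X := hXmeas.mono (S10.coordGT_le k) le_rfl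
  have hYm' : Measurable Y := hYm.mono (S10.coordLE_le k) le_rfl
  have hindep : ProbabilityTheory.IndepFun X Y P := by
    rw [ProbabilityTheory.IndepFun_iff_Indep]
    exact ProbabilityTheory.indep_of_indep_of_le_left
      (ProbabilityTheory.indep_of_indep_of_le_right
        ((S10.indep_coord P hP k).symm) (measurable_iff_comap_le.mp hYm))
      (measurable_iff_comap_le.mp hXmeas)
  have hXint : Integrable X P :=
    ⟨hXm.aestronglyMeasurable, HasFiniteIntegral.of_bounded (C := M)
      (Filter.Eventually.of_forall fun β => by rw [Real.norm_eq_abs]; exact hM β)⟩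
  have hYint : Integrable Y P :=
    ⟨hYm'.aestronglyMeasurable, HasFiniteIntegral.of_bounded (C := 1)
      (Filter.Eventually.of_forall fun β => by
        rw [Real.norm_eq_abs, hYdef, Set.indicator_apply]
        split <;> norm_num)⟩
  have hmul := ProbabilityTheory.IndepFun.integral_mul_eq_mul_integral hindep hXint.aestronglyMeasurable hYint.aestronglyMeasurable
  have hY : ∫ β, Y β ∂P = (P G).toReal := by
    rw [hYdef]
    rw [integral_indicator_const (1:ℝ) hG]
    simp [Measure.real]
  have hfinal : ∫ β, X β * Y β ∂P = (P G).toReal * ∫ β, X β ∂P := by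
    have h1 : ∫ β, X β * Y β ∂P = ∫ β, (X * Y) β ∂P := rfl
    rw [h1, hmul, hY]
    ring
  exact hfinal
end
end

section
/- Let γ ∈ (0,1/2), let r ≥ 2 be an integer, let j ≥ 0 be an integer, and set θ(j) := ⌈(jγ + r)/(1−γ)⌉. Let K, J, I be axis-parallel cubes in ℝ^N with J ⊆ K, ℓ(J) = 2^{−j−θ(j)}ℓ(K), dist(J,∂K) ≥ ℓ(J)^γ ℓ(K)^{1−γ}, ℓ(I) ≤ ℓ(J), and D(I,J) := ℓ(I) + dist(I,J) + ℓ(J) ≤ 2^{j+1}ℓ(J). Then dist(I,∂K) ≥ (1/2)·ℓ(J)^γ ℓ(K)^{1−γ}, where all distances are taken in the ℓ^∞ metric. -/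
open MeasureTheory

noncomputable section

lemma mem_cube_self {N : ℕ} (c : Euc N) {l : ℝ} (hl : 0 < l) : c ∈ cube c l := by
  intro i; exact ⟨le_refl _, by linarith⟩

lemma cube_dist_le {N : ℕ} {c : Euc N} {l : ℝ} (hl : 0 ≤ l) {x y : Euc N}
    (hx : x ∈ cube c l) (hy : y ∈ cube c l) : dist x y ≤ l := by
  rw [dist_pi_le_iff hl]
  intro i
  have h1 := hx i; have h2 := hy i
  rw [Real.dist_eq, abs_le]
  constructor <;> linarith [h1.1, h1.2, h2.1, h2.2]

lemma bdd_image2 {N : ℕ} (A B : Set (Euc N)) : BddBelow (Set.image2 dist A B) := by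
  refine ⟨0, ?_⟩
  rintro _ ⟨a, _, b, _, rfl⟩
  exact dist_nonneg

/-- the smaller cube `I` of a pair `(I,J)` appearing in `σ_out^{ij}` is
far from the boundary of `K = I^{(i+j+θ(j))}`. -/
theorem statement_12 (N : ℕ) (γ : ℝ) (hγ0 : 0 < γ) (hγ2 : γ < 1/2)
    (r : ℤ) (hr : 2 ≤ r) (j : ℤ) (hj : 0 ≤ j)
    (cK cJ cI : Euc N) (lK lJ lI : ℝ) (hlK : 0 < lK) (hlJ : 0 < lJ) (hlI : 0 < lI)
    (hJK : cube cJ lJ ⊆ cube cK lK)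
    (hsize : lJ = (2:ℝ) ^ (-j - ⌈(j * γ + r) / (1 - γ)⌉) * lK)
    (hgood : lJ ^ γ * lK ^ (1 - γ) ≤ setDist (cube cJ lJ) (frontier (cube cK lK)))
    (hIJ : lI ≤ lJ)
    (hD : lI + setDist (cube cI lI) (cube cJ lJ) + lJ ≤ 2 ^ (j + 1) * lJ) :
    (1/2) * lJ ^ γ * lK ^ (1 - γ) ≤ setDist (cube cI lI) (frontier (cube cK lK)) := by
  have h1γ : (0:ℝ) < 1 - γ := by linarith
  set θ : ℤ := ⌈(j * γ + r) / (1 - γ)⌉ with hθ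
  set A : ℝ := lJ ^ γ * lK ^ (1 - γ) with hAdef
  have hApos : 0 < A := mul_pos (Real.rpow_pos_of_pos hlJ γ) (Real.rpow_pos_of_pos hlK _)
  -- numeric lemma : 2^(j+1) * lJ ≤ A / 2
  have hceil : (j * γ + r) / (1 - γ) ≤ (θ : ℝ) := Int.le_ceil _
  have hθineq : (j : ℝ) * γ + r ≤ (θ : ℝ) * (1 - γ) := by
    have := (div_le_iff₀ h1γ).mp hceil
    linarith
  have hr' : (2:ℝ) ≤ (r:ℝ) := by exact_mod_cast hr
  have hAeq : A = (2:ℝ) ^ (((-j - θ : ℤ) : ℝ) * γ) * lK := by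
    rw [hAdef, hsize, Real.mul_rpow (by positivity) hlK.le]
    rw [← Real.rpow_intCast (2:ℝ) (-j - θ), ← Real.rpow_mul (by norm_num)]
    rw [mul_assoc, ← Real.rpow_add hlK]
    norm_num
  have hnum : (2:ℝ) ^ (j + 1) * lJ ≤ A / 2 := by
    rw [hsize, hAeq]
    rw [← mul_assoc, ← zpow_add₀ (by norm_num : (2:ℝ) ≠ 0)]
    rw [div_eq_mul_one_div, mul_comm _ (1/(2:ℝ)), ← mul_assoc]
    apply mul_le_mul_of_nonneg_right _ hlK.le
    have h2 : (1:ℝ)/2 = (2:ℝ) ^ (-1 : ℝ) := by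
      rw [Real.rpow_neg_one]; norm_num
    rw [h2, ← Real.rpow_add (by norm_num : (0:ℝ) < 2)]
    rw [← Real.rpow_intCast (2:ℝ) (j + 1 + (-j - θ))]
    apply Real.rpow_le_rpow_left_iff (by norm_num : (1:ℝ) < 2) |>.mpr
    push_cast
    nlinarith [hθineq, hγ0.le, hj, mul_nonneg (Int.cast_nonneg_iff.mpr hj : (0:ℝ) ≤ j) hγ0.le]
  -- frontier empty case
  rcases Set.eq_empty_or_nonempty (frontier (cube cK lK)) with hfe | hfne
  · exfalso
    rw [setDist, hfe, Set.image2_empty_right, Real.sInf_empty] at hgood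
    linarith
  -- main case
  obtain ⟨yb, hyb⟩ := hfne
  have hInem : cI ∈ cube cI lI := mem_cube_self cI hlI
  apply le_csInf ⟨dist cI yb, Set.mem_image2_of_mem hInem hyb⟩
  rintro b ⟨x, hx, y, hy, rfl⟩
  set d : ℝ := setDist (cube cI lI) (cube cJ lJ) with hd
  have key : A ≤ dist x y + lI + d := by
    apply le_of_forall_pos_le_add
    intro ε hε
    obtain ⟨a, ha, halt⟩ := Real.lt_sInf_add_pos
      (Set.Nonempty.image2 ⟨cI, hInem⟩ ⟨cJ, mem_cube_self cJ hlJ⟩) hε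
    obtain ⟨x₀, hx₀, z₀, hz₀, rfl⟩ := ha
    have h1 : A ≤ dist z₀ y := le_trans hgood (csInf_le (bdd_image2 _ _)
      (Set.mem_image2_of_mem hz₀ hy))
    have h2 : dist x x₀ ≤ lI := cube_dist_le hlI.le hx hx₀
    have h3 : dist z₀ y ≤ dist z₀ x₀ + dist x₀ x + dist x y := dist_triangle4 _ _ _ _
    rw [dist_comm z₀ x₀, dist_comm x₀ x] at h3
    have : dist x₀ z₀ < d + ε := halt
    linarith
  have hdlI : lI + d ≤ A / 2 - lJ := by
    linarith [hnum, hD]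
  have : A ≤ dist x y + A / 2 - lJ := by linarith
  rw [hAdef] at this
  linarith
end
end

section
/- Let K and Q be axis-parallel cubes in ℝ^N with ℓ(Q) > ℓ(K), let δ ∈ (0,1], and suppose there exists a point x ∈ K ∩ Q with dist(x, ∂K) ≥ δ·ℓ(K) in the ℓ^∞ metric. Then K ∩ Q contains a cube of sidelength δ·ℓ(K); in particular the Lebesgue measure satisfies |K ∩ Q| ≥ δ^N·|K|. -/
open MeasureTheory

noncomputable section

lemma cube_eq_pi {N : ℕ} (c : Euc N) (l : ℝ) :
    cube c l = Set.pi Set.univ (fun i => Set.Ico (c i) (c i + l)) := by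
  ext y; simp [cube, Set.mem_pi, Set.mem_Ico]

lemma volume_cube {N : ℕ} (c : Euc N) (l : ℝ) :
    volume (cube c l) = ENNReal.ofReal l ^ N := by
  rw [cube_eq_pi, volume_pi_pi]
  simp [Real.volume_Ico]

/-- if a point of `K ∩ Q` is at `ℓ^∞`-distance at least `δ·ℓ(K)` from `∂K`
and `ℓ(Q) > ℓ(K)`, then `K ∩ Q` contains a cube of sidelength `δ·ℓ(K)`; in particular
`|K ∩ Q| ≥ δ^N |K|`. -/
theorem statement_14 (N : ℕ) (cK cQ : Euc N) (lK lQ : ℝ) (hlK : 0 < lK) (hlQ : lK < lQ)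
    (δ : ℝ) (hδ0 : 0 < δ) (hδ1 : δ ≤ 1)
    (x : Euc N) (hx : x ∈ cube cK lK ∩ cube cQ lQ)
    (hdist : δ * lK ≤ Metric.infDist x (frontier (cube cK lK))) :
    (∃ c : Euc N, cube c (δ * lK) ⊆ cube cK lK ∩ cube cQ lQ) ∧
      ENNReal.ofReal (δ ^ N) * volume (cube cK lK) ≤ volume (cube cK lK ∩ cube cQ lQ) := by
  obtain ⟨hxK, hxQ⟩ := hx
  have hxK' : ∀ i, cK i ≤ x i ∧ x i < cK i + lK := hxK
  have hxQ' : ∀ i, cQ i ≤ x i ∧ x i < cQ i + lQ := hxQ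
  set l' := δ * lK with hl'
  have hl'pos : 0 < l' := mul_pos hδ0 hlK
  have hl'le : l' ≤ lK := by
    calc l' = δ * lK := rfl
    _ ≤ 1 * lK := by nlinarith
    _ = lK := one_mul lK
  have key : ∀ i, cK i + l' ≤ x i ∧ x i + l' ≤ cK i + lK := by
    intro i
    have hx1 : cK i ≤ x i := (hxK' i).1
    have hx2 : x i < cK i + lK := (hxK' i).2
    constructor
    · set w : Euc N := Function.update x i (cK i) with hw
      have hwfr : w ∈ frontier (cube cK lK) := by
        rw [frontier_eq_closure_inter_closure]
        constructor
        · apply subset_closure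
          intro j
          rcases eq_or_ne j i with rfl | hj
          · simp [hw, hlK]
          · simpa [hw, Function.update_of_ne hj] using hxK' j
        · rw [Metric.mem_closure_iff]
          intro ε hε
          refine ⟨Function.update x i (cK i - ε/2), ?_, ?_⟩
          · intro hmem
            have h := (hmem i).1
            simp only [Function.update_self] at h
            linarith
          · have hle : dist w (Function.update x i (cK i - ε/2)) ≤ ε/2 := by
              rw [dist_pi_le_iff (by positivity)]
              intro j
              rcases eq_or_ne j i with rfl | hj
              · simp only [hw, Function.update_self, Real.dist_eq]
                rw [abs_of_nonneg (by linarith)]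
                linarith
              · simp [hw, Function.update_of_ne hj]
                positivity
            linarith
      have h1 : Metric.infDist x (frontier (cube cK lK)) ≤ dist x w :=
        Metric.infDist_le_dist_of_mem hwfr
      have h2 : dist x w ≤ x i - cK i := by
        rw [dist_pi_le_iff (by linarith)]
        intro j
        rcases eq_or_ne j i with rfl | hj
        · simp only [hw, Function.update_self, Real.dist_eq]
          rw [abs_of_nonneg (by linarith)]
        · simp [hw, Function.update_of_ne hj]
          linarith
      linarith
    · set w : Euc N := Function.update x i (cK i + lK) with hw
      have hwfr : w ∈ frontier (cube cK lK) := by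
        rw [frontier_eq_closure_inter_closure]
        constructor
        · rw [Metric.mem_closure_iff]
          intro ε hε
          set m := min (ε/2) (lK/2) with hm
          have hm0 : 0 < m := lt_min (by linarith) (by linarith)
          refine ⟨Function.update x i (cK i + lK - m), ?_, ?_⟩
          · intro j
            rcases eq_or_ne j i with rfl | hj
            · constructor
              · simp only [Function.update_self]
                have : m ≤ lK/2 := min_le_right _ _
                linarith
              · simp only [Function.update_self]
                linarith
            · simpa [Function.update_of_ne hj] using hxK' j
          · have hle : dist w (Function.update x i (cK i + lK - m)) ≤ m := by
              rw [dist_pi_le_iff hm0.le]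
              intro j
              rcases eq_or_ne j i with rfl | hj
              · simp only [hw, Function.update_self, Real.dist_eq]
                rw [abs_of_nonneg (by linarith)]
                linarith
              · simp [hw, Function.update_of_ne hj]
                positivity
            have : m ≤ ε/2 := min_le_left _ _
            linarith
        · apply subset_closure
          intro hmem
          have h := (hmem i).2
          simp only [hw, Function.update_self] at h
          linarith
      have h1 : Metric.infDist x (frontier (cube cK lK)) ≤ dist x w :=
        Metric.infDist_le_dist_of_mem hwfr
      have h2 : dist x w ≤ cK i + lK - x i := by
        rw [dist_pi_le_iff (by linarith)]
        intro j
        rcases eq_or_ne j i with rfl | hj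
        · simp only [hw, Function.update_self, Real.dist_eq]
          rw [abs_of_nonpos (by linarith)]
          linarith
        · simp [hw, Function.update_of_ne hj]
          linarith
      linarith
  -- construct the corner
  set c : Euc N := fun i => if x i + l' ≤ cQ i + lQ then x i else cQ i + lQ - l' with hc
  have hsub : cube c l' ⊆ cube cK lK ∩ cube cQ lQ := by
    intro y hy
    have hbounds : ∀ i, cK i ≤ c i ∧ c i + l' ≤ cK i + lK ∧ cQ i ≤ c i ∧ c i + l' ≤ cQ i + lQ := by
      intro i
      have k1 := (key i).1
      have k2 := (key i).2
      have q1 := (hxQ' i).1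
      have q2 := (hxQ' i).2
      by_cases h : x i + l' ≤ cQ i + lQ
      · simp only [hc, if_pos h]
        refine ⟨by linarith, by linarith, by linarith, h⟩
      · push_neg at h
        simp only [hc, if_neg (not_le.mpr h)]
        refine ⟨by linarith, by linarith, by linarith, by linarith⟩
    constructor
    · intro i
      obtain ⟨b1, b2, b3, b4⟩ := hbounds i
      have := hy i
      exact ⟨by linarith [this.1], by linarith [this.2]⟩
    · intro i
      obtain ⟨b1, b2, b3, b4⟩ := hbounds i
      have := hy i
      exact ⟨by linarith [this.1], by linarith [this.2]⟩
  refine ⟨⟨c, hsub⟩, ?_⟩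
  calc ENNReal.ofReal (δ ^ N) * volume (cube cK lK)
      = ENNReal.ofReal (δ ^ N) * ENNReal.ofReal lK ^ N := by rw [volume_cube]
    _ = ENNReal.ofReal l' ^ N := by
        rw [← ENNReal.ofReal_pow (by linarith : (0:ℝ) ≤ lK),
          ← ENNReal.ofReal_mul (by positivity), ← mul_pow]
        exact ENNReal.ofReal_pow hl'pos.le N
    _ = volume (cube c l') := (volume_cube c l').symm
    _ ≤ volume (cube cK lK ∩ cube cQ lQ) := measure_mono hsub
end
end
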